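/- Let a, τ, α₀, p be real numbers with a > 0, τ > 0, α₀ > 0 and p > 0, and define g : ℝ → ℝ by g(y) = a²·y³ + a·(2 − a·p)·y² + (1 − 2·a·p)·y − p + a·τ·α₀. If a·τ·α₀ < p ≤ 1/(2a), then there exists exactly one y > 0 with g(y) = 0. -/

import Mathlib

/-- If `aτα₀ < p ≤ 1/(2a)`, the cubic
`g(y) = a²y³ + a(2 − ap)y² + (1 − 2ap)y − p + aτα₀` has exactly one positive root. -/
theorem cubic_unique_positive_root
    (a τ α₀ p : ℝ) (ha : 0 < a) (hτ : 0 < τ) (hα : 0 < α₀) (hp : 0 < p)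
    (g : ℝ → ℝ)
    (hg : ∀ y, g y = a^2 * y^3 + a * (2 - a*p) * y^2 + (1 - 2*a*p) * y - p + a*τ*α₀)
    (h1 : a*τ*α₀ < p) (h2 : p ≤ 1/(2*a)) :
    ∃! y : ℝ, 0 < y ∧ g y = 0 := by
  have hap : 2*a*p ≤ 1 := by
    have := (le_div_iff₀ (by positivity : (0:ℝ) < 2*a)).mp h2
    linarith
  -- strict monotonicity on nonnegatives
  have hmono : ∀ x y : ℝ, 0 ≤ x → x < y → g x < g y := by
    intro x y hx hxy
    have hy : 0 < y := lt_of_le_of_lt hx hxy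
    have key : g y - g x
        = (y - x) * (a^2*(x^2 + x*y + y^2) + a*(2 - a*p)*(x + y) + (1 - 2*a*p)) := by
      rw [hg, hg]; ring
    have h3 : 0 < x^2 + x*y + y^2 := by nlinarith [sq_nonneg x, mul_nonneg hx hy.le]
    have hpos : 0 < a^2*(x^2 + x*y + y^2) + a*(2 - a*p)*(x + y) + (1 - 2*a*p) := by
      have h4 : 0 ≤ a*(2 - a*p)*(x + y) :=
        mul_nonneg (mul_nonneg ha.le (by nlinarith)) (by linarith)
      nlinarith [mul_pos (pow_pos ha 2) h3]
    nlinarith [mul_pos (sub_pos.mpr hxy) hpos]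
  set M : ℝ := max 1 (p/a^2) with hM
  have hM1 : (1:ℝ) ≤ M := le_max_left _ _
  have hM2 : p/a^2 ≤ M := le_max_right _ _
  have hMp : a^2 * M ≥ p := by
    rw [ge_iff_le, ← div_le_iff₀' (by positivity : (0:ℝ) < a^2)]
    exact hM2
  have hM0 : (0:ℝ) ≤ M := by linarith
  have hg0 : g 0 < 0 := by rw [hg]; nlinarith
  have hgM : 0 < g M := by
    rw [hg]
    nlinarith [mul_pos (mul_pos ha hτ) hα,
      mul_nonneg (mul_nonneg ha.le (by nlinarith : (0:ℝ) ≤ 2 - a*p)) (sq_nonneg M),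
      mul_nonneg (by linarith : (0:ℝ) ≤ 1 - 2*a*p) hM0,
      mul_nonneg (mul_nonneg (mul_pos ha ha).le hM0)
        (mul_nonneg (by linarith : (0:ℝ) ≤ M - 1) (by linarith : (0:ℝ) ≤ M + 1))]
  have hgc : Continuous g := by
    have : g = fun y => a^2 * y^3 + a * (2 - a*p) * y^2 + (1 - 2*a*p) * y - p + a*τ*α₀ :=
      funext hg
    rw [this]; continuity
  obtain ⟨y, hyIcc, hgy⟩ := intermediate_value_Icc hM0 hgc.continuousOn
    (Set.mem_Icc.mpr ⟨hg0.le, hgM.le⟩)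
  have hy0 : 0 < y := by
    rcases lt_or_eq_of_le hyIcc.1 with h | h
    · exact h
    · exact absurd hgy (by rw [← h]; exact ne_of_lt hg0)
  refine ⟨y, ⟨hy0, hgy⟩, ?_⟩
  rintro z ⟨hz0, hgz⟩
  rcases lt_trichotomy z y with h | h | h
  · have := hmono z y hz0.le h; rw [hgz, hgy] at this; linarith
  · exact h
  · have := hmono y z hy0.le h; rw [hgz, hgy] at this; linarith
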